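/- For every natural number i and every real number t with 0 < t < 1/2, the series Σ_{n=0}^∞ f(i,n)·tⁿ converges and its sum equals ((1 − √(1 − 4t²))/(2t))^i · (1 − √(1 − 4t²))/(2t²). -/

import Mathlib

/-- The number of walks of length `n` on the nonnegative integers starting at `0`,
ending at `i`, with steps `+1` or `-1`. -/
noncomputable def walkCount (i n : ℕ) : ℕ :=
  Nat.card {w : Fin (n + 1) → ℕ //
    w 0 = 0 ∧ w (Fin.last n) = i ∧
    ∀ k : Fin n, ((w k.succ : ℤ) - (w k.castSucc : ℤ)).natAbs = 1}

namespace WalkAux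
def P (i n : ℕ) (w : Fin (n + 1) → ℕ) : Prop :=
    w 0 = 0 ∧ w (Fin.last n) = i ∧
    ∀ k : Fin n, ((w k.succ : ℤ) - (w k.castSucc : ℤ)).natAbs = 1

lemma restrict {i n : ℕ} {w : Fin (n + 2) → ℕ} (h : P i (n+1) w) :
    P (w (Fin.castSucc (Fin.last n))) n (Fin.init w) ∧
      ((i : ℤ) - (w (Fin.castSucc (Fin.last n)) : ℤ)).natAbs = 1 := by
  obtain ⟨h0, hl, hs⟩ := h
  refine ⟨⟨?_, rfl, ?_⟩, ?_⟩
  · simpa [Fin.init] using h0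
  · intro k
    have := hs k.castSucc
    show ((w k.succ.castSucc : ℤ) - (w k.castSucc.castSucc : ℤ)).natAbs = 1
    rw [← Fin.succ_castSucc]; exact this
  · have e : w ((Fin.last n).succ) = i := hl
    have := hs (Fin.last n)
    rw [← e]
    omega

lemma snocP {j n : ℕ} {v : Fin (n + 1) → ℕ} (h : P j n v) (c : ℕ)
    (hc : ((c : ℤ) - (j : ℤ)).natAbs = 1) : P c (n + 1) (Fin.snoc v c) := by
  obtain ⟨h0, hl, hs⟩ := h
  refine ⟨?_, by simp, ?_⟩
  · rw [show (0 : Fin (n + 2)) = Fin.castSucc 0 from rfl, Fin.snoc_castSucc]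
    exact h0
  · intro k
    induction k using Fin.lastCases with
    | last =>
      rw [Fin.succ_last, Fin.snoc_last, Fin.snoc_castSucc, hl]
      exact hc
    | cast k =>
      rw [Fin.succ_castSucc, Fin.snoc_castSucc, Fin.snoc_castSucc]
      exact hs k

lemma snoc_eq_self {i n : ℕ} {w : Fin (n + 2) → ℕ} (h : P i (n+1) w) (c : ℕ)
    (hc : c = i) : Fin.snoc (Fin.init w) c = w := by
  rw [hc, ← h.2.1]
  exact Fin.snoc_init_self w

def equivZero (n : ℕ) : {w // P 0 (n+1) w} ≃ {w // P 1 n w} where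
  toFun w := ⟨Fin.init w.1, by
    have h := restrict w.2
    have hj : w.1 (Fin.castSucc (Fin.last n)) = 1 := by
      have := h.2; omega
    have h1 := h.1
    rwa [hj] at h1⟩
  invFun v := ⟨Fin.snoc v.1 0, snocP v.2 0 (by simp)⟩
  left_inv w := Subtype.ext (snoc_eq_self w.2 0 rfl)
  right_inv v := Subtype.ext (by simp)

def equivSucc (i n : ℕ) :
    {w // P (i+1) (n+1) w} ≃ {w // P i n w} ⊕ {w // P (i+2) n w} where
  toFun w :=
    if h : w.1 (Fin.castSucc (Fin.last n)) = i then
      Sum.inl ⟨Fin.init w.1, by have h1 := (restrict w.2).1; rwa [h] at h1⟩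
    else
      Sum.inr ⟨Fin.init w.1, by
        have h2 := (restrict w.2).2
        have hj : w.1 (Fin.castSucc (Fin.last n)) = i + 2 := by omega
        have h1 := (restrict w.2).1; rwa [hj] at h1⟩
  invFun v := v.elim
    (fun v => ⟨Fin.snoc v.1 (i+1), snocP v.2 (i+1) (by push_cast; simp)⟩)
    (fun v => ⟨Fin.snoc v.1 (i+1), snocP v.2 (i+1) (by push_cast; omega)⟩)
  left_inv w := by
    by_cases h : w.1 (Fin.castSucc (Fin.last n)) = i <;>
      simp only [h, dif_pos, dif_neg, not_false_iff, Sum.elim_inl, Sum.elim_inr] <;>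
      exact Subtype.ext (snoc_eq_self w.2 (i+1) rfl)
  right_inv v := by
    cases v with
    | inl v =>
      have hc : (Fin.snoc v.1 (i+1) : Fin (n+2) → ℕ) (Fin.castSucc (Fin.last n)) = i := by
        rw [Fin.snoc_castSucc]; exact v.2.2.1
      simp only [Sum.elim_inl]
      refine (dif_pos hc).trans ?_
      exact congrArg Sum.inl (Subtype.ext (by simp))
    | inr v =>
      have hc : (Fin.snoc v.1 (i+1) : Fin (n+2) → ℕ) (Fin.castSucc (Fin.last n)) = i + 2 := by
        rw [Fin.snoc_castSucc]; exact v.2.2.1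
      simp only [Sum.elim_inr]
      refine (dif_neg (by omega : ¬ (Fin.snoc v.1 (i+1) : Fin (n+2) → ℕ) (Fin.castSucc (Fin.last n)) = i)).trans ?_
      exact congrArg Sum.inr (Subtype.ext (by simp))

lemma walk_le {n : ℕ} (w : Fin (n + 1) → ℕ) (h0 : w 0 = 0)
    (hs : ∀ k : Fin n, ((w k.succ : ℤ) - (w k.castSucc : ℤ)).natAbs = 1) :
    ∀ k : Fin (n + 1), w k ≤ (k : ℕ) := by
  intro ⟨m, hm⟩
  induction m with
  | zero => simpa [show (⟨0, hm⟩ : Fin (n+1)) = 0 from rfl] using h0.le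
  | succ m ih =>
    have hk : m < n := by omega
    have hm' : m < n + 1 := by omega
    have h1 := hs ⟨m, hk⟩
    have h2 := ih hm'
    simp only [Fin.succ_mk, Fin.castSucc_mk, Fin.val_mk] at *
    omega

instance walkFinite (i n : ℕ) : Finite ({w // P i n w}) := by
  have : Function.Injective (fun w : {w // P i n w} => fun k : Fin (n+1) =>
      (⟨w.1 k, Nat.lt_of_le_of_lt (walk_le w.1 w.2.1 w.2.2.2 k) k.isLt⟩ : Fin (n+1))) := by
    intro a b h
    refine Subtype.ext (funext fun k => ?_)
    exact congrArg Fin.val (congrFun h k)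
  exact Finite.of_injective _ this

lemma walkCount_le (i n : ℕ) : walkCount i n ≤ 2 ^ n := by
  have hinj : Function.Injective (fun w : {w // P i n w} => fun k : Fin n =>
      decide (w.1 k.castSucc < w.1 k.succ)) := by
    intro a b h
    refine Subtype.ext (funext ?_)
    intro ⟨m, hm⟩
    induction m with
    | zero =>
      show a.1 ⟨0, hm⟩ = b.1 ⟨0, hm⟩
      rw [show (⟨0, hm⟩ : Fin (n+1)) = 0 from rfl, a.2.1, b.2.1]
    | succ m ih =>
      have hk : m < n := by omega
      have hm' : m < n + 1 := by omega
      have h1 := a.2.2.2 ⟨m, hk⟩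
      have h2 := b.2.2.2 ⟨m, hk⟩
      have h3 := congrFun h ⟨m, hk⟩
      simp only [decide_eq_decide] at h3
      have h4 : a.1 ⟨m, hm'⟩ = b.1 ⟨m, hm'⟩ := ih hm'
      show a.1 ⟨m+1, hm⟩ = b.1 ⟨m+1, hm⟩
      simp only [Fin.succ_mk, Fin.castSucc_mk, Fin.val_mk] at h1 h2 h3 h4 ⊢
      omega
  calc walkCount i n ≤ Nat.card (Fin n → Bool) := Nat.card_le_card_of_injective _ hinj
    _ = 2 ^ n := by simp [Nat.card_eq_fintype_card]


lemma walkCount_eq (i n : ℕ) : walkCount i n = Nat.card {w // P i n w} := rfl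

lemma count_start (i : ℕ) : walkCount i 0 = if i = 0 then 1 else 0 := by
  rw [walkCount_eq]
  rcases eq_or_ne i 0 with h | h
  · subst h
    rw [if_pos rfl]
    have : Unique {w // P 0 0 w} :=
      ⟨⟨⟨fun _ => 0, rfl, rfl, fun k => k.elim0⟩⟩, by
        rintro ⟨w, h0, hl, _⟩
        refine Subtype.ext (funext fun x => ?_)
        have hx : x = 0 := Fin.eq_of_val_eq (by omega)
        show w x = 0
        rw [hx, h0]⟩
    exact Nat.card_unique
  · rw [if_neg h]
    have : IsEmpty {w // P i 0 w} := ⟨by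
      rintro ⟨w, h0, hl, _⟩
      have : w (Fin.last 0) = w 0 := rfl
      omega⟩
    exact Nat.card_of_isEmpty

lemma count_zero_succ (n : ℕ) : walkCount 0 (n + 1) = walkCount 1 n :=
  Nat.card_congr (equivZero n)

lemma count_succ_succ (i n : ℕ) :
    walkCount (i + 1) (n + 1) = walkCount i n + walkCount (i + 2) n := by
  rw [walkCount_eq, Nat.card_congr (equivSucc i n), Nat.card_sum, ← walkCount_eq, ← walkCount_eq]

end WalkAux
set_option maxHeartbeats 2000000 in
theorem walk_series_sum (i : ℕ) (t : ℝ) (ht0 : 0 < t) (ht1 : t < 1 / 2) :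
    HasSum (fun n : ℕ => (walkCount i n : ℝ) * t ^ n)
      (((1 - Real.sqrt (1 - 4 * t ^ 2)) / (2 * t)) ^ i *
        ((1 - Real.sqrt (1 - 4 * t ^ 2)) / (2 * t ^ 2))) := by
  have ht2 : (0:ℝ) < 1 - 4 * t ^ 2 := by nlinarith
  set s : ℝ := Real.sqrt (1 - 4 * t ^ 2) with hs_def
  have hs2 : s ^ 2 = 1 - 4 * t ^ 2 := Real.sq_sqrt ht2.le
  have hs0 : 0 < s := Real.sqrt_pos.mpr ht2
  have hs1 : s < 1 := by nlinarith
  set α : ℝ := (1 - s) / (2 * t) with hα_def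
  set β : ℝ := (1 + s) / (2 * t) with hβ_def
  have htne : t ≠ 0 := ne_of_gt ht0
  have hα0 : 0 < α := div_pos (by linarith) (by linarith)
  have hβ0 : 0 < β := div_pos (by linarith) (by linarith)
  have hαβ : α * β = 1 := by
    rw [hα_def, hβ_def]; field_simp; nlinarith
  have hα1 : α < 1 := by
    rw [hα_def, div_lt_one (by linarith)]; nlinarith
  have hβ1 : 1 < β := by
    rw [hβ_def, lt_div_iff₀ (by linarith)]; nlinarith
  have hqα : t * α ^ 2 - α + t = 0 := by
    rw [hα_def]; field_simp; nlinarith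
  have hqβ : t * β ^ 2 - β + t = 0 := by
    rw [hβ_def]; field_simp; nlinarith
  -- summability
  have hgeom : Summable (fun n : ℕ => (2 * t) ^ n) :=
    summable_geometric_of_lt_one (by linarith) (by linarith)
  have hle : ∀ j n, (walkCount j n : ℝ) * t ^ n ≤ (2 * t) ^ n := by
    intro j n
    rw [mul_pow]
    apply mul_le_mul_of_nonneg_right _ (le_of_lt (pow_pos ht0 n))
    calc (walkCount j n : ℝ) ≤ ((2 ^ n : ℕ) : ℝ) := by
          exact_mod_cast WalkAux.walkCount_le j n
      _ = 2 ^ n := by push_cast; ring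
  have hsum : ∀ j, Summable (fun n : ℕ => (walkCount j n : ℝ) * t ^ n) := by
    intro j
    exact Summable.of_nonneg_of_le (fun n => by positivity) (hle j) hgeom
  set S : ℕ → ℝ := fun j => ∑' n, (walkCount j n : ℝ) * t ^ n with hS_def
  have hS_nonneg : ∀ j, 0 ≤ S j := fun j => tsum_nonneg (fun n => by positivity)
  have hS_bdd : ∀ j, S j ≤ (1 - 2 * t)⁻¹ := by
    intro j
    calc S j ≤ ∑' n : ℕ, (2 * t) ^ n := Summable.tsum_le_tsum (hle j) (hsum j) hgeom
      _ = (1 - 2 * t)⁻¹ := tsum_geometric_of_lt_one (by linarith) (by linarith)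
  have h0 : S 0 = 1 + t * S 1 := by
    have e1 : (walkCount 0 0 : ℝ) * t ^ 0 = 1 := by
      rw [WalkAux.count_start]; norm_num
    have e2 : (fun n : ℕ => (walkCount 0 (n + 1) : ℝ) * t ^ (n + 1)) =
        fun n : ℕ => t * ((walkCount 1 n : ℝ) * t ^ n) := by
      funext n; rw [WalkAux.count_zero_succ]; ring
    have key := Summable.tsum_eq_zero_add (hsum 0)
    rw [e1, e2, tsum_mul_left] at key
    exact key
  have hrec : ∀ j, S (j + 1) = t * S j + t * S (j + 2) := by
    intro j
    have e1 : (walkCount (j + 1) 0 : ℝ) * t ^ 0 = 0 := by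
      rw [WalkAux.count_start]; norm_num
    have e2 : (fun n : ℕ => (walkCount (j + 1) (n + 1) : ℝ) * t ^ (n + 1)) =
        fun n : ℕ => t * ((walkCount j n : ℝ) * t ^ n)
          + t * ((walkCount (j + 2) n : ℝ) * t ^ n) := by
      funext n; rw [WalkAux.count_succ_succ]; push_cast; ring
    have key := Summable.tsum_eq_zero_add (hsum (j + 1))
    rw [e1, e2, Summable.tsum_add ((hsum j).mul_left t) ((hsum (j+2)).mul_left t),
      tsum_mul_left, tsum_mul_left, zero_add] at key
    exact key
  have hβα : β - α = s / t := by rw [hα_def, hβ_def]; field_simp; ring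
  have hβαne : β - α ≠ 0 := by rw [hβα]; positivity
  set A : ℝ := (β * S 0 - S 1) / (β - α) with hA_def
  set B : ℝ := (S 1 - α * S 0) / (β - α) with hB_def
  have hform : ∀ j, S j = A * α ^ j + B * β ^ j := by
    intro j
    induction j using Nat.twoStepInduction with
    | zero => rw [hA_def, hB_def]; field_simp; ring
    | one => rw [hA_def, hB_def]; field_simp; ring
    | more j ih2 ih1 =>
      have key : t * S (j + 2) = S (j + 1) - t * S j := by
        have := hrec j; linarith
      apply mul_left_cancel₀ htne
      rw [key, ih1, ih2]
      linear_combination (-(A * α ^ j)) * hqα + (-(B * β ^ j)) * hqβ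
  have hB0 : B = 0 := by
    by_contra hB
    have hbound : ∀ j : ℕ, |B| * β ^ j ≤ (1 - 2 * t)⁻¹ + |A| := by
      intro j
      have h1 : |B| * β ^ j = |B * β ^ j| := by
        rw [abs_mul, abs_of_nonneg (le_of_lt (pow_pos hβ0 j))]
      have h2 : B * β ^ j = S j - A * α ^ j := by rw [hform j]; ring
      have h3 : |S j - A * α ^ j| ≤ S j + |A| * α ^ j := by
        calc |S j - A * α ^ j| ≤ |S j| + |A * α ^ j| := abs_sub _ _
          _ = S j + |A| * α ^ j := by
            rw [abs_of_nonneg (hS_nonneg j), abs_mul,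
              abs_of_nonneg (le_of_lt (pow_pos hα0 j))]
      have h4 : α ^ j ≤ 1 := pow_le_one₀ hα0.le hα1.le
      have h5 : |A| * α ^ j ≤ |A| := by nlinarith [abs_nonneg A]
      rw [h1, h2]
      have := hS_bdd j
      linarith
    have htend : Filter.Tendsto (fun j : ℕ => |B| * β ^ j) Filter.atTop Filter.atTop :=
      (tendsto_pow_atTop_atTop_of_one_lt hβ1).const_mul_atTop (abs_pos.mpr hB)
    obtain ⟨j, hj⟩ := (htend.eventually (Filter.eventually_gt_atTop
      ((1 - 2 * t)⁻¹ + |A|))).exists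
    exact absurd (hbound j) (not_le.mpr hj)
  have hS0 : S 0 = A := by rw [hform 0]; simp [hB0]
  have hS1 : S 1 = A * α := by rw [hform 1]; simp [hB0]
  have hA : A = α / t := by
    have h1 : A = 1 + t * (A * α) := by rw [← hS1, ← h0, hS0]
    have h2 : α * (1 - t * α) = t := by nlinarith [hqα]
    have h3 : 1 - t * α ≠ 0 := by
      intro h
      rw [h, mul_zero] at h2
      exact htne h2.symm
    rw [eq_div_iff htne]
    linear_combination α * h1 - A * h2
  have hfinal : S i = α ^ i * ((1 - s) / (2 * t ^ 2)) := by
    rw [hform i, hB0, hA]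
    have : α / t = (1 - s) / (2 * t ^ 2) := by
      rw [hα_def, div_div]; congr 1; ring
    rw [this]; ring
  rw [Summable.hasSum_iff (hsum i)]
  exact hfinal
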